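/- Let H be a finite group and let x ∈ H be an involution (x² = 1 and x ≠ 1). Let S = {w ∈ H : ⁅x,w⁆ has odd order}, and for w ∈ S define f(w) = w·⁅x,w⁆^((n−1)/2) where n is the order of ⁅x,w⁆. Then f(w) lies in the centralizer C_H(x) for every w ∈ S, and for every c ∈ C_H(x) the fiber {w ∈ S : f(w) = c} has exactly |S|/|C_H(x)| elements; equivalently, |{w ∈ S : f(w) = c}| · |C_H(x)| = |S| for every c ∈ C_H(x). -/

import Mathlib

section BrayAux
variable {H : Type*} [Group H]

theorem bray_mem (x : H) (hx2 : x ^ 2 = 1) (w : H)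
    (hw : Odd (orderOf (x⁻¹ * w⁻¹ * x * w))) :
    w * (x⁻¹ * w⁻¹ * x * w) ^ ((orderOf (x⁻¹ * w⁻¹ * x * w) - 1) / 2) ∈
      Subgroup.centralizer ({x} : Set H) := by
  have hxx : x * x = 1 := by rw [← sq]; exact hx2
  have hxi : x⁻¹ = x := inv_eq_of_mul_eq_one_right hxx
  set a := x⁻¹ * w⁻¹ * x * w with ha
  obtain ⟨k, hk⟩ := hw
  have hhalf : (orderOf a - 1) / 2 = k := by omega
  have hsemi : SemiconjBy x a a⁻¹ := by
    show x * a = a⁻¹ * x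
    have hxc : ∀ t : H, x * (x * t) = t := fun t => by rw [← mul_assoc, hxx, one_mul]
    simp [ha, mul_inv_rev, hxi, mul_assoc, hxc, hxx]
  have key3 : x * w = w * x * a := by rw [ha]; group
  have hpow : a ^ (2 * k + 1) = 1 := by rw [← hk]; exact pow_orderOf_eq_one _
  have hinv : (a ^ (k + 1))⁻¹ = a ^ k :=
    inv_eq_of_mul_eq_one_left (by rw [← pow_add]; rw [show k + (k + 1) = 2 * k + 1 by ring]; exact hpow)
  rw [Subgroup.mem_centralizer_iff]
  intro g hg
  rw [Set.mem_singleton_iff] at hg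
  rw [hg, hhalf]
  calc x * (w * a ^ k) = (x * w) * a ^ k := by rw [mul_assoc]
    _ = w * (x * (a * a ^ k)) := by rw [key3]; group
    _ = w * (x * a ^ (k + 1)) := by rw [← pow_succ']
    _ = w * ((a⁻¹) ^ (k + 1) * x) := by rw [(hsemi.pow_right (k + 1)).eq]
    _ = w * (a ^ k * x) := by rw [inv_pow, hinv]
    _ = w * a ^ k * x := by rw [mul_assoc]

theorem bray_comm_shift (x z w : H) (hz : z ∈ Subgroup.centralizer ({x} : Set H)) :
    x⁻¹ * (z * w)⁻¹ * x * (z * w) = x⁻¹ * w⁻¹ * x * w := by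
  have hzx : x * z = z * x := hz x (Set.mem_singleton x)
  have h' : ∀ t : H, z⁻¹ * (x * t) = x * (z⁻¹ * t) := by
    intro t
    rw [← mul_assoc, ← mul_assoc, ((show Commute x z from hzx).inv_right).eq]
  simp [mul_inv_rev, mul_assoc, h']

theorem bray_fiber_card [Fintype H] [DecidableEq H] (x : H) (c d : H)
    (hc : c ∈ Subgroup.centralizer ({x} : Set H))
    (hd : d ∈ Subgroup.centralizer ({x} : Set H)) :
    ((Finset.univ.filter (fun w : H => Odd (orderOf (x⁻¹ * w⁻¹ * x * w)))).filter
        (fun w => w * (x⁻¹ * w⁻¹ * x * w) ^ ((orderOf (x⁻¹ * w⁻¹ * x * w) - 1) / 2) = c)).card =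
    ((Finset.univ.filter (fun w : H => Odd (orderOf (x⁻¹ * w⁻¹ * x * w)))).filter
        (fun w => w * (x⁻¹ * w⁻¹ * x * w) ^ ((orderOf (x⁻¹ * w⁻¹ * x * w) - 1) / 2) = d)).card := by
  have hmem : ∀ (u v : H), u ∈ Subgroup.centralizer ({x} : Set H) →
      v ∈ Subgroup.centralizer ({x} : Set H) →
      ∀ w, w * (x⁻¹ * w⁻¹ * x * w) ^ ((orderOf (x⁻¹ * w⁻¹ * x * w) - 1) / 2) = u →
        Odd (orderOf (x⁻¹ * w⁻¹ * x * w)) →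
        Odd (orderOf (x⁻¹ * (v * u⁻¹ * w)⁻¹ * x * (v * u⁻¹ * w))) ∧
        (v * u⁻¹ * w) * (x⁻¹ * (v * u⁻¹ * w)⁻¹ * x * (v * u⁻¹ * w)) ^
          ((orderOf (x⁻¹ * (v * u⁻¹ * w)⁻¹ * x * (v * u⁻¹ * w)) - 1) / 2) = v := by
    intro u v hu hv w hfw hodd
    have hz : v * u⁻¹ ∈ Subgroup.centralizer ({x} : Set H) :=
      mul_mem hv (inv_mem hu)
    rw [bray_comm_shift x (v * u⁻¹) w hz]
    refine ⟨hodd, ?_⟩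
    rw [mul_assoc, hfw]
    group
  apply Finset.card_bij' (fun w _ => d * c⁻¹ * w) (fun w _ => c * d⁻¹ * w)
  · intro w hw
    simp only [Finset.mem_filter, Finset.mem_univ, true_and] at hw ⊢
    exact ⟨(hmem c d hc hd w hw.2 hw.1).1, (hmem c d hc hd w hw.2 hw.1).2⟩
  · intro w hw
    simp only [Finset.mem_filter, Finset.mem_univ, true_and] at hw ⊢
    exact ⟨(hmem d c hd hc w hw.2 hw.1).1, (hmem d c hd hc w hw.2 hw.1).2⟩
  · intro w _; group
  · intro w _; group

end BrayAux



/-- Bray's involution-centralizer theorem, uniform-distribution statement: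
for an involution `x` in a finite group `H`, the map
`w ↦ w·⁅x,w⁆^((n-1)/2)` (where `n = orderOf ⁅x,w⁆`), defined on the set `S` of
elements `w` for which `⁅x,w⁆ = x⁻¹w⁻¹xw` has odd order, takes values in the
centralizer `C_H(x)`, and each fiber over an element of `C_H(x)` has exactly
`|S|/|C_H(x)|` elements. -/
theorem bray_uniform {H : Type*} [Group H] [Fintype H] [DecidableEq H]
    (x : H) (hx2 : x ^ 2 = 1) (hx1 : x ≠ 1) :
    (∀ w ∈ Finset.univ.filter (fun w : H => Odd (orderOf (x⁻¹ * w⁻¹ * x * w))),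
      w * (x⁻¹ * w⁻¹ * x * w) ^ ((orderOf (x⁻¹ * w⁻¹ * x * w) - 1) / 2) ∈
        Subgroup.centralizer {x}) ∧
    (∀ c ∈ Subgroup.centralizer ({x} : Set H),
      ((Finset.univ.filter (fun w : H => Odd (orderOf (x⁻¹ * w⁻¹ * x * w)))).filter
          (fun w => w * (x⁻¹ * w⁻¹ * x * w) ^ ((orderOf (x⁻¹ * w⁻¹ * x * w) - 1) / 2) = c)).card *
        Nat.card (Subgroup.centralizer ({x} : Set H)) =
      (Finset.univ.filter (fun w : H => Odd (orderOf (x⁻¹ * w⁻¹ * x * w)))).card) := by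
  classical
  constructor
  · intro w hw
    rw [Finset.mem_filter] at hw
    exact bray_mem x hx2 w hw.2
  · intro c hc
    set S : Finset H := Finset.univ.filter (fun w : H => Odd (orderOf (x⁻¹ * w⁻¹ * x * w)))
      with hS
    set f : H → H := fun w =>
      w * (x⁻¹ * w⁻¹ * x * w) ^ ((orderOf (x⁻¹ * w⁻¹ * x * w) - 1) / 2) with hf
    set T : Finset H := Finset.univ.filter (fun y => y ∈ Subgroup.centralizer ({x} : Set H))
      with hT
    have hcard : S.card = ∑ d ∈ T, (S.filter (fun w => f w = d)).card := by
      apply Finset.card_eq_sum_card_fiberwise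
      intro w hw
      exact Finset.mem_coe.2 (Finset.mem_filter.2 ⟨Finset.mem_univ _,
        bray_mem x hx2 w (Finset.mem_filter.1 (Finset.mem_coe.1 hw)).2⟩)
    have heq : ∀ d ∈ T, (S.filter (fun w => f w = d)).card
        = (S.filter (fun w => f w = c)).card := by
      intro d hd
      rw [hT, Finset.mem_filter] at hd
      exact bray_fiber_card x d c hd.2 hc
    rw [Finset.sum_congr rfl heq, Finset.sum_const, smul_eq_mul] at hcard
    have hTcard : Nat.card (Subgroup.centralizer ({x} : Set H)) = T.card := by
      rw [Nat.card_eq_fintype_card, hT]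
      exact Fintype.card_subtype _
    rw [hTcard, hcard, mul_comm]
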